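/- The bracket defined on n = (V ⊗ W) ⊕ V* ⊕ W by [v₁⊗w₁, v₂⊗w₂] = ω(w₁,w₂)·B(v₁,v₂), [φ, v⊗w] = φ(v)·w (with all other brackets between graded pieces zero, extended antisymmetrically) satisfies the Jacobi identity, and hence makes n a Lie algebra. -/

import Mathlib

open TensorProduct

variable {V W : Type*} [AddCommGroup V] [Module ℂ V] [AddCommGroup W] [Module ℂ W]

/-- The underlying space of the Lie algebra `n = (V ⊗ W) ⊕ V* ⊕ W`. -/
abbrev nSpace (V W : Type*) [AddCommGroup V] [Module ℂ V] [AddCommGroup W] [Module ℂ W] :=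
  (V ⊗[ℂ] W) × Module.Dual ℂ V × W

/-- The bilinear map `(V ⊗ W) × (V ⊗ W) → V*` sending `(v₁⊗w₁, v₂⊗w₂)` to `ω(w₁,w₂) • B(v₁,v₂)`,
where `B v₁ v₂ = c v₁ v₂`. -/
noncomputable def brOne (c : V →ₗ[ℂ] V →ₗ[ℂ] Module.Dual ℂ V) (ω : W →ₗ[ℂ] W →ₗ[ℂ] ℂ) :
    (V ⊗[ℂ] W) →ₗ[ℂ] (V ⊗[ℂ] W) →ₗ[ℂ] Module.Dual ℂ V :=
  TensorProduct.curry ((TensorProduct.rid ℂ (Module.Dual ℂ V)).toLinearMap ∘ₗ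
    TensorProduct.map (TensorProduct.lift c) (TensorProduct.lift ω) ∘ₗ
    (TensorProduct.tensorTensorTensorComm ℂ V W V W).toLinearMap)

/-- The pairing `V* × (V ⊗ W) → W` sending `(φ, v⊗w)` to `φ(v) • w`. -/
noncomputable def brTwo (φ : Module.Dual ℂ V) : (V ⊗[ℂ] W) →ₗ[ℂ] W :=
  (TensorProduct.lid ℂ W).toLinearMap ∘ₗ TensorProduct.map φ LinearMap.id

theorem brOne_tmul (c : V →ₗ[ℂ] V →ₗ[ℂ] Module.Dual ℂ V) (ω : W →ₗ[ℂ] W →ₗ[ℂ] ℂ)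
    (v₁ v₂ : V) (w₁ w₂ : W) : brOne c ω (v₁ ⊗ₜ w₁) (v₂ ⊗ₜ w₂) = ω w₁ w₂ • c v₁ v₂ := by
  simp [brOne]

theorem brTwo_tmul (φ : Module.Dual ℂ V) (v : V) (w : W) : brTwo φ (v ⊗ₜ w) = φ v • w := by
  simp [brTwo]

theorem brTwo_add (φ ψ : Module.Dual ℂ V) (x : V ⊗[ℂ] W) :
    brTwo (φ + ψ) x = brTwo φ x + brTwo ψ x := by
  simp [brTwo, TensorProduct.map_add_left]

theorem brTwo_smul (s : ℂ) (φ : Module.Dual ℂ V) (x : V ⊗[ℂ] W) :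
    brTwo (s • φ) x = s • brTwo φ x := by
  simp [brTwo, TensorProduct.map_smul_left]

theorem brOne_antisymm (c : V →ₗ[ℂ] V →ₗ[ℂ] Module.Dual ℂ V)
    (hc₁ : ∀ u v w : V, c u v w = c v u w)
    (ω : W →ₗ[ℂ] W →ₗ[ℂ] ℂ) (hω : ∀ w : W, ω w w = 0) (x y : V ⊗[ℂ] W) :
    brOne c ω x y = - brOne c ω y x := by
  have hanti : ∀ a b : W, ω a b = - ω b a := by
    intro a b
    have h := hω (a + b)
    simp only [map_add, LinearMap.add_apply, hω] at h
    linear_combination h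
  rw [← sub_eq_zero, sub_neg_eq_add]
  have : brOne c ω + (brOne c ω).flip = 0 := by
    ext v₁ w₁ v₂ w₂ u
    simp only [TensorProduct.AlgebraTensorModule.curry_apply, TensorProduct.curry_apply,
      LinearMap.coe_restrictScalars, LinearMap.add_apply, LinearMap.flip_apply, brOne_tmul,
      LinearMap.zero_apply, LinearMap.smul_apply, smul_eq_mul]
    rw [hanti w₂ w₁, hc₁ v₂ v₁ u]
    ring
  calc brOne c ω x y + brOne c ω y x = (brOne c ω + (brOne c ω).flip) x y := by simp
    _ = 0 := by rw [this]; simp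

theorem brTwo_zero (x : V ⊗[ℂ] W) : brTwo (0 : Module.Dual ℂ V) x = 0 := by
  have h := brTwo_smul (0 : ℂ) (0 : Module.Dual ℂ V) x
  simpa using h

theorem keyW (hW : Module.finrank ℂ W = 2) (ω : W →ₗ[ℂ] W →ₗ[ℂ] ℂ) (hω : ∀ w : W, ω w w = 0)
    (w₁ w₂ w₃ : W) : ω w₁ w₂ • w₃ + ω w₂ w₃ • w₁ + ω w₃ w₁ • w₂ = 0 := by
  have hanti : ∀ a b : W, ω a b = - ω b a := by
    intro a b
    have h := hω (a + b)
    simp only [map_add, LinearMap.add_apply, hω] at h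
    linear_combination h
  have : FiniteDimensional ℂ W := FiniteDimensional.of_finrank_pos (by omega)
  let b : Module.Basis (Fin 2) ℂ W := Module.finBasisOfFinrankEq ℂ W hW
  have hw : ∀ w : W, w = b.repr w 0 • b 0 + b.repr w 1 • b 1 := by
    intro w
    have := b.sum_repr w
    rwa [Fin.sum_univ_two, eq_comm] at this
  rw [hw w₁, hw w₂, hw w₃]
  have h10 : ω (b 1) (b 0) = - ω (b 0) (b 1) := hanti _ _
  simp only [map_add, map_smul, LinearMap.add_apply, LinearMap.smul_apply, smul_eq_mul,
    hω, h10]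
  module

theorem jac3 (hW : Module.finrank ℂ W = 2) (c : V →ₗ[ℂ] V →ₗ[ℂ] Module.Dual ℂ V)
    (hc₁ : ∀ u v w : V, c u v w = c v u w) (hc₂ : ∀ u v w : V, c u v w = c u w v)
    (ω : W →ₗ[ℂ] W →ₗ[ℂ] ℂ) (hω : ∀ w : W, ω w w = 0) (a b d : V ⊗[ℂ] W) :
    brTwo (brOne c ω a b) d + brTwo (brOne c ω b d) a + brTwo (brOne c ω d a) b = 0 := by
  induction a using TensorProduct.induction_on with
  | zero => simp [brTwo_zero]
  | add x y hx hy =>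
      simp only [map_add, LinearMap.add_apply, brTwo_add]
      linear_combination (norm := abel) hx + hy
  | tmul v₁ w₁ =>
    induction b using TensorProduct.induction_on with
    | zero => simp [brTwo_zero]
    | add x y hx hy =>
        simp only [map_add, LinearMap.add_apply, brTwo_add]
        linear_combination (norm := abel) hx + hy
    | tmul v₂ w₂ =>
      induction d using TensorProduct.induction_on with
      | zero => simp [brTwo_zero]
      | add x y hx hy =>
          simp only [map_add, LinearMap.add_apply, brTwo_add]
          linear_combination (norm := abel) hx + hy
      | tmul v₃ w₃ =>
          simp only [brOne_tmul, brTwo_smul, brTwo_tmul, LinearMap.smul_apply, smul_eq_mul]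
          rw [show c v₂ v₃ v₁ = c v₁ v₂ v₃ from by rw [hc₂, hc₁],
            show c v₃ v₁ v₂ = c v₁ v₂ v₃ from by rw [hc₁, hc₂]]
          simp only [mul_comm _ (c v₁ v₂ v₃), mul_smul]
          rw [← smul_add, ← smul_add, keyW hW ω hω, smul_zero]


/-- The bracket on `n = (V ⊗ W) ⊕ V* ⊕ W`:
`[v₁⊗w₁, v₂⊗w₂] = ω(w₁,w₂) B(v₁,v₂)`, `[φ, v⊗w] = φ(v) w`, other brackets zero,
extended antisymmetrically and bilinearly. -/
noncomputable def nBracket (c : V →ₗ[ℂ] V →ₗ[ℂ] Module.Dual ℂ V) (ω : W →ₗ[ℂ] W →ₗ[ℂ] ℂ)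
    (x y : nSpace V W) : nSpace V W :=
  (0, brOne c ω x.1 y.1, brTwo x.2.1 y.1 - brTwo y.2.1 x.1)

/-- The bracket on `n = (V ⊗ W) ⊕ V* ⊕ W` is antisymmetric and satisfies the Jacobi
identity, hence makes `n` a Lie algebra.  Here `c` is a symmetric trilinear form on `V`
(with `B v₁ v₂ = c v₁ v₂ ∈ V*`), `ω` is a nonzero alternating form on the 2-dimensional
space `W`. -/
theorem nBracket_jacobi
    (hW : Module.finrank ℂ W = 2)
    (c : V →ₗ[ℂ] V →ₗ[ℂ] Module.Dual ℂ V)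
    (hc₁ : ∀ u v w : V, c u v w = c v u w) (hc₂ : ∀ u v w : V, c u v w = c u w v)
    (ω : W →ₗ[ℂ] W →ₗ[ℂ] ℂ) (hω : ∀ w : W, ω w w = 0) (hω0 : ω ≠ 0) :
    (∀ x y : nSpace V W, nBracket c ω x y = - nBracket c ω y x) ∧
    (∀ x y z : nSpace V W,
      nBracket c ω (nBracket c ω x y) z + nBracket c ω (nBracket c ω y z) x +
        nBracket c ω (nBracket c ω z x) y = 0) := by
  constructor
  · intro x y
    simp only [nBracket, Prod.neg_mk, Prod.mk.injEq]
    refine ⟨by simp, brOne_antisymm c hc₁ ω hω _ _, by abel⟩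
  · intro x y z
    simp only [nBracket, Prod.mk_add_mk, Prod.mk_eq_zero]
    refine ⟨by simp, by simp, ?_⟩
    simp only [map_zero, sub_zero, LinearMap.zero_apply]
    exact jac3 hW c hc₁ hc₂ ω hω x.1 y.1 z.1
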